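/- Two permutations σ and μ of S_n have the same binary search tree shape (i.e., inserting the letters of σ and of μ from right to left into an initially empty binary search tree yields equal unlabelled trees) if and only if σ and μ are connected by a chain of elementary sylvester relations, where w_1 = u·ac·v·b·w and w_2 = u·ca·v·b·w are elementary related whenever a ≤ b < c. -/

import Mathlib

/-- Unlabelled binary trees. -/
inductive Tree0 where
  | leaf : Tree0
  | node : Tree0 → Tree0 → Tree0
deriving DecidableEq

/-- Labelled binary trees (labels in `ℕ`). -/
inductive BT where
  | leaf : BT
  | node : BT → ℕ → BT → BT
deriving DecidableEq

namespace BT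

/-- Binary search tree insertion: `k` goes left if `≤` the root, right if `>`. -/
def bstInsert (k : ℕ) : BT → BT
  | leaf => node leaf k leaf
  | node l x r => if k ≤ x then node (bstInsert k l) x r else node l x (bstInsert k r)

/-- Insert the letters of a word from right to left into an empty BST. -/
def abr (w : List ℕ) : BT := w.foldr bstInsert leaf

/-- Underlying unlabelled shape. -/
def shape : BT → Tree0
  | leaf => Tree0.leaf
  | node l _ r => Tree0.node (shape l) (shape r)

end BT

/-- The word of values of a permutation of `{1,…,n}`. -/
def wordOf {n : ℕ} (σ : Equiv.Perm (Fin n)) : List ℕ :=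
  List.ofFn fun i => (σ i : ℕ) + 1

/-- Elementary sylvester relation: `u·ac·v·b·w ≡ u·ca·v·b·w` whenever `a ≤ b < c`. -/
def SylvRel (w₁ w₂ : List ℕ) : Prop :=
  ∃ (u v w : List ℕ) (a b c : ℕ), a ≤ b ∧ b < c ∧
    w₁ = u ++ a :: c :: (v ++ b :: w) ∧ w₂ = u ++ c :: a :: (v ++ b :: w)

namespace BT

def toList : BT → List ℕ
  | leaf => []
  | node l x r => toList l ++ x :: toList r

inductive ST : BT → Prop
  | leaf : ST leaf
  | node {l r : BT} {x : ℕ} : (∀ y ∈ toList l, y ≤ x) → (∀ y ∈ toList r, x < y) →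
      ST l → ST r → ST (node l x r)

lemma toList_insert_perm (k : ℕ) (t : BT) : (toList (bstInsert k t)).Perm (k :: toList t) := by
  induction t with
  | leaf => simp [bstInsert, toList]
  | node l x r ihl ihr =>
    by_cases h : k ≤ x
    · simp only [bstInsert, if_pos h, toList]
      exact (ihl.append_right _)
    · simp only [bstInsert, if_neg h, toList]
      refine (List.Perm.append_left _ (List.Perm.cons x ihr)).trans ?_
      have h2 : toList l ++ x :: k :: toList r = (toList l ++ [x]) ++ k :: toList r := by simp
      rw [h2]
      refine List.perm_middle.trans ?_
      simp

lemma mem_insert {y k : ℕ} {t : BT} (h : y ∈ toList (bstInsert k t)) : y = k ∨ y ∈ toList t := by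
  have := (toList_insert_perm k t).mem_iff.1 h
  simpa using this

lemma ST_insert {t : BT} (k : ℕ) (h : ST t) : ST (bstInsert k t) := by
  induction h with
  | leaf => exact ST.node (by simp [toList]) (by simp [toList]) ST.leaf ST.leaf
  | node hl hr _ _ ihl ihr =>
    rename_i l r x _ _
    by_cases hk : k ≤ x
    · simp only [bstInsert, if_pos hk]
      refine ST.node ?_ hr ihl ‹_›
      intro y hy
      rcases mem_insert hy with rfl | hy
      · exact hk
      · exact hl y hy
    · simp only [bstInsert, if_neg hk]
      refine ST.node hl ?_ ‹_› ihr
      intro y hy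
      rcases mem_insert hy with rfl | hy
      · omega
      · exact hr y hy

lemma ST_abr (w : List ℕ) : ST (abr w) := by
  induction w with
  | nil => exact ST.leaf
  | cons a w ih => exact ST_insert a ih

lemma toList_abr_perm (w : List ℕ) : (toList (abr w)).Perm w := by
  induction w with
  | nil => simp [abr, toList]
  | cons a w ih =>
    exact ((toList_insert_perm a (abr w)).trans (ih.cons a))

lemma ST_sorted {t : BT} (h : ST t) : (toList t).Pairwise (· ≤ ·) := by
  induction h with
  | leaf => simp [toList]
  | node hl hr _ _ ihl ihr =>
    rename_i l r x _ _
    simp only [toList]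
    rw [List.pairwise_append]
    refine ⟨ihl, ?_, ?_⟩
    · rw [List.pairwise_cons]
      exact ⟨fun y hy => (hr y hy).le, ihr⟩
    · intro a ha b hb
      rcases List.mem_cons.1 hb with rfl | hb
      · exact hl a ha
      · exact (hl a ha).trans (hr b hb).le

def sz : Tree0 → ℕ
  | Tree0.leaf => 0
  | Tree0.node l r => sz l + sz r + 1

lemma length_toList (t : BT) : (toList t).length = sz (shape t) := by
  induction t with
  | leaf => simp [toList, shape, sz]
  | node l x r ihl ihr => simp [toList, shape, sz, ihl, ihr]; omega

lemma eq_of_shape_toList : ∀ {s t : BT}, shape s = shape t → toList s = toList t → s = t := by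
  intro s
  induction s with
  | leaf =>
    intro t hs _
    cases t with
    | leaf => rfl
    | node l' x' r' => simp [shape] at hs
  | node l x r ihl ihr =>
    intro t hs hL
    cases t with
    | leaf => simp [shape] at hs
    | node l' x' r' =>
      simp only [shape, Tree0.node.injEq] at hs
      have hlen : (toList l).length = (toList l').length := by
        rw [length_toList, length_toList, hs.1]
      simp only [toList] at hL
      obtain ⟨h1, h2⟩ := List.append_inj hL hlen
      injection h2 with hx h3
      rw [ihl hs.1 h1, ihr hs.2 h3, hx]

lemma insert_comm {a b c : ℕ} (hab : a ≤ b) (hbc : b < c) :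
    ∀ {t : BT}, ST t → b ∈ toList t →
    bstInsert a (bstInsert c t) = bstInsert c (bstInsert a t) := by
  intro t h
  induction h with
  | leaf => simp [toList]
  | node hl hr _ _ ihl ihr =>
    rename_i l r x _ _
    intro hb
    by_cases hcx : c ≤ x
    · have hax : a ≤ x := by omega
      have hbl : b ∈ toList l := by
        rcases (by simpa [toList] using hb : b ∈ toList l ∨ b = x ∨ b ∈ toList r) with h1 | h1 | h1
        · exact h1
        · omega
        · exact absurd (hr b h1) (by omega)
      simp [bstInsert, if_pos hcx, if_pos hax, ihl hbl]
    · by_cases hax : a ≤ x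
      · simp [bstInsert, if_pos hax, if_neg hcx]
      · have hbr : b ∈ toList r := by
          rcases (by simpa [toList] using hb : b ∈ toList l ∨ b = x ∨ b ∈ toList r) with h1 | h1 | h1
          · exact absurd (hl b h1) (by omega)
          · omega
          · exact h1
        simp [bstInsert, if_neg hcx, if_neg hax, ihr hbr]

lemma foldr_insert_node (w : List ℕ) (l r : BT) (x : ℕ) :
    List.foldr bstInsert (node l x r) w =
      node (List.foldr bstInsert l (w.filter (· ≤ x))) x
        (List.foldr bstInsert r (w.filter (fun y => ¬ y ≤ x))) := by
  induction w with
  | nil => simp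
  | cons a w ih =>
    by_cases h : a ≤ x
    · simp [List.filter_cons, h, ih, bstInsert]
    · simp [List.filter_cons, h, ih, bstInsert, Nat.lt_of_not_le h]

def canon : BT → List ℕ
  | leaf => []
  | node l x r => canon l ++ canon r ++ [x]

end BT

abbrev SRel : List ℕ → List ℕ → Prop := fun x y => SylvRel x y ∨ SylvRel y x

lemma SylvRel.context {w₁ w₂ : List ℕ} (p s : List ℕ) (h : SylvRel w₁ w₂) :
    SylvRel (p ++ w₁ ++ s) (p ++ w₂ ++ s) := by
  obtain ⟨u, v, w, a, b, c, hab, hbc, rfl, rfl⟩ := h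
  exact ⟨p ++ u, v, w ++ s, a, b, c, hab, hbc, by simp, by simp⟩

lemma rtg_context {w₁ w₂ : List ℕ} (p s : List ℕ)
    (h : Relation.ReflTransGen SRel w₁ w₂) :
    Relation.ReflTransGen SRel (p ++ w₁ ++ s) (p ++ w₂ ++ s) := by
  induction h with
  | refl => exact .refl
  | tail _ hstep ih =>
    exact ih.tail (hstep.imp (SylvRel.context p s) (SylvRel.context p s))

lemma bubble {x c : ℕ} (hc : x < c) :
    ∀ (L : List ℕ), (∀ a ∈ L, a ≤ x) → ∀ (v s : List ℕ),
      Relation.ReflTransGen SRel (c :: (L ++ v ++ x :: s)) (L ++ c :: (v ++ x :: s))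
  | [], _, v, s => by simp; exact .refl
  | a :: L, hL, v, s => by
    have step : SRel (c :: a :: (L ++ v ++ x :: s)) (a :: c :: (L ++ v ++ x :: s)) :=
      Or.inr ⟨[], L ++ v, s, a, x, c, hL a (by simp), hc, by simp, by simp⟩
    refine Relation.ReflTransGen.head step ?_
    have := bubble hc L (fun b hb => hL b (by simp [hb])) v s
    simpa using rtg_context [a] [] this

lemma partition_rtg (x : ℕ) : ∀ (w' s : List ℕ),
    Relation.ReflTransGen SRel (w' ++ x :: s)
      (w'.filter (· ≤ x) ++ w'.filter (fun y => ¬ y ≤ x) ++ x :: s)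
  | [], s => by simp; exact .refl
  | y :: w', s => by
    have ih := rtg_context [y] [] (partition_rtg x w' s)
    by_cases h : y ≤ x
    · simpa [List.filter_cons, h] using ih
    · have hb := bubble (Nat.lt_of_not_le h) (w'.filter (· ≤ x))
        (fun a ha => by simpa using (List.of_mem_filter ha))
        (w'.filter (fun y => ¬ y ≤ x)) s
      have := Relation.ReflTransGen.trans (by simpa using ih) hb
      simpa [List.filter_cons, h, if_pos (Nat.lt_of_not_le h)] using this

lemma abr_concat (w' : List ℕ) (x : ℕ) :
    BT.abr (w' ++ [x]) =
      BT.node (BT.abr (w'.filter (· ≤ x))) x (BT.abr (w'.filter (fun y => ¬ y ≤ x))) := by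
  show List.foldr BT.bstInsert BT.leaf (w' ++ [x]) = _
  rw [List.foldr_append]
  exact BT.foldr_insert_node w' BT.leaf BT.leaf x

lemma to_canon : ∀ (N : ℕ) (w : List ℕ), w.length ≤ N →
    Relation.ReflTransGen SRel w (BT.canon (BT.abr w))
  | N, w, h => by
    rcases List.eq_nil_or_concat w with rfl | ⟨w', x, rfl⟩
    · simp [BT.abr, BT.canon]; exact .refl
    · have hlen : w'.length < N := by
        simp only [List.concat_eq_append, List.length_append] at h; simpa using h
      rw [List.concat_eq_append, abr_concat]
      have h1 := partition_rtg x w' []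
      have h2 := rtg_context [] (w'.filter (fun y => ¬ y ≤ x) ++ [x])
        (to_canon (N - 1) (w'.filter (· ≤ x))
          (by have := List.length_filter_le (fun y => decide (y ≤ x)) w'; omega))
      have h3 := rtg_context (BT.canon (BT.abr (w'.filter (· ≤ x)))) [x]
        (to_canon (N - 1) (w'.filter (fun y => ¬ y ≤ x))
          (by have := List.length_filter_le (fun y => decide (¬ y ≤ x)) w'; omega))
      simp only [BT.canon, List.nil_append, List.append_assoc] at *
      exact (h1.trans h2).trans h3
  termination_by N => N

lemma abr_sylv {w₁ w₂ : List ℕ} (h : SylvRel w₁ w₂) : BT.abr w₁ = BT.abr w₂ := by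
  obtain ⟨u, v, w, a, b, c, hab, hbc, rfl, rfl⟩ := h
  show List.foldr _ _ _ = List.foldr _ _ _
  rw [List.foldr_append, List.foldr_append]
  congr 1
  show BT.bstInsert a (BT.bstInsert c (BT.abr (v ++ b :: w))) =
    BT.bstInsert c (BT.bstInsert a (BT.abr (v ++ b :: w)))
  exact BT.insert_comm hab hbc (BT.ST_abr _)
    ((BT.toList_abr_perm (v ++ b :: w)).mem_iff.2 (by simp))

lemma wordOf_perm {n : ℕ} (σ μ : Equiv.Perm (Fin n)) : (wordOf σ).Perm (wordOf μ) := by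
  have h1 : wordOf σ = List.ofFn ((fun i : Fin n => (i : ℕ) + 1) ∘ σ) := rfl
  have h2 : wordOf μ = List.ofFn ((fun i : Fin n => (i : ℕ) + 1) ∘ μ) := rfl
  rw [h1, h2]
  exact (Equiv.Perm.ofFn_comp_perm σ _).trans (Equiv.Perm.ofFn_comp_perm μ _).symm

/-- Two permutations have the same binary search tree shape (inserting
their letters from right to left) iff they are connected by a chain of elementary
sylvester relations. -/
theorem same_bst_iff_sylvester (n : ℕ) (σ μ : Equiv.Perm (Fin n)) :
    BT.shape (BT.abr (wordOf σ)) = BT.shape (BT.abr (wordOf μ)) ↔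
      Relation.ReflTransGen (fun x y => SylvRel x y ∨ SylvRel y x)
        (wordOf σ) (wordOf μ) := by
  constructor
  · intro h
    have hperm : (BT.toList (BT.abr (wordOf σ))).Perm (BT.toList (BT.abr (wordOf μ))) :=
      ((BT.toList_abr_perm _).trans (wordOf_perm σ μ)).trans (BT.toList_abr_perm _).symm
    have heq : BT.abr (wordOf σ) = BT.abr (wordOf μ) :=
      BT.eq_of_shape_toList h
        (List.Perm.eq_of_pairwise' (BT.ST_sorted (BT.ST_abr _)) (BT.ST_sorted (BT.ST_abr _)) hperm)
    have h1 := to_canon (wordOf σ).length (wordOf σ) le_rfl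
    have h2 := to_canon (wordOf μ).length (wordOf μ) le_rfl
    rw [heq] at h1
    exact h1.trans ((@Relation.ReflTransGen.symmetric _ _ ⟨fun a b hab => hab.symm⟩).symm _ _ h2)
  · intro h
    have : ∀ {w₁ w₂ : List ℕ}, Relation.ReflTransGen SRel w₁ w₂ → BT.abr w₁ = BT.abr w₂ := by
      intro w₁ w₂ h
      induction h with
      | refl => rfl
      | tail _ hstep ih =>
        rcases hstep with hs | hs
        · rw [ih, abr_sylv hs]
        · rw [ih, (abr_sylv hs).symm]
    rw [this h]
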